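/- Consider the noisy saddle with parameters a₁, a₂ > 0 and b₁, b₂ ∈ ℝ, driven by paths w¹, w² of linear growth, and let Φ(t, (x,y)) = ( φ_{a₁,b₁}(t, w¹, x), ψ_{a₂,b₂}(t, w², y) ) denote the joint pathwise solution operator. Then the stable and unstable manifolds of the stationary orbit are invariant: for every t ∈ ℝ, Φ(t, ·) maps 𝒮(w) = { (x, y) ∈ ℝ² : x = x̃_{a₁,b₁}(w¹) } bijectively onto 𝒮(θ_t w) = { (x, y) : x = x̃_{a₁,b₁}(θ_t w¹) }, and maps 𝒰(w) = { (x, y) : y = ỹ_{a₂,b₂}(w²) } bijectively onto 𝒰(θ_t w) = { (x, y) : y = ỹ_{a₂,b₂}(θ_t w²) }. -/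

import Mathlib

open MeasureTheory Filter Topology

/-- The pathwise solution operator `φ_{a,b}` of the expanding component `dX = aX dt + b dW`. -/
noncomputable def phiSol (a b t : ℝ) (w : ℝ → ℝ) (x : ℝ) : ℝ :=
  Real.exp (a * t) * x + b * w t +
    a * b * Real.exp (a * t) * ∫ s in (0 : ℝ)..t, Real.exp (-a * s) * w s

/-- The pathwise solution operator `ψ_{a,b}` of the contracting component `dY = -aY dt + b dW`. -/
noncomputable def psiSol (a b t : ℝ) (w : ℝ → ℝ) (y : ℝ) : ℝ :=
  Real.exp (-a * t) * y + b * w t -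
    a * b * Real.exp (-a * t) * ∫ s in (0 : ℝ)..t, Real.exp (a * s) * w s

/-- The shift `θ_t w` of a path `w`: `(θ_t w)(s) = w(t + s) - w(t)`. -/
def shiftPath (t : ℝ) (w : ℝ → ℝ) : ℝ → ℝ := fun s => w (t + s) - w t

/-- `x̃_{a,b}(w) = -a b ∫₀^∞ e^{-a s} w(s) ds`. -/
noncomputable def xStat (a b : ℝ) (w : ℝ → ℝ) : ℝ :=
  -(a * b) * ∫ s in Set.Ioi (0 : ℝ), Real.exp (-a * s) * w s

/-- `ỹ_{a,b}(w) = -a b ∫_{-∞}^0 e^{a s} w(s) ds`. -/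
noncomputable def yStat (a b : ℝ) (w : ℝ → ℝ) : ℝ :=
  -(a * b) * ∫ s in Set.Iio (0 : ℝ), Real.exp (a * s) * w s

/-! ### Auxiliary lemmas -/

section Aux

private lemma affine_bij {m : ℝ} (hm : m ≠ 0) (d : ℝ) :
    Function.Bijective (fun x : ℝ => m * x + d) := by
  constructor
  · intro x y h
    simp only at h
    exact mul_left_cancel₀ hm (by linarith)
  · intro y
    exact ⟨(y - d) / m, by field_simp; ring⟩

private lemma me_add (t : ℝ) : MeasurableEmbedding (fun x : ℝ => t + x) :=
  (Homeomorph.addLeft t).isClosedEmbedding.measurableEmbedding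

private lemma integral_Ioi_shift (f : ℝ → ℝ) (t c : ℝ) :
    ∫ x in Set.Ioi c, f (t + x) = ∫ x in Set.Ioi (t + c), f x := by
  have h := (me_add t).setIntegral_map (μ := volume) f (Set.Ioi (t + c))
  rw [map_add_left_eq_self volume t] at h
  rw [h, Set.preimage_const_add_Ioi, add_sub_cancel_left]

private lemma integral_Iio_shift (f : ℝ → ℝ) (t c : ℝ) :
    ∫ x in Set.Iio c, f (t + x) = ∫ x in Set.Iio (t + c), f x := by
  have h := (me_add t).setIntegral_map (μ := volume) f (Set.Iio (t + c))
  rw [map_add_left_eq_self volume t] at h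
  rw [h, Set.preimage_const_add_Iio, add_sub_cancel_left]

private lemma integrableOn_Ioi_shift {f : ℝ → ℝ} {t c : ℝ}
    (hf : IntegrableOn f (Set.Ioi (t + c))) :
    IntegrableOn (fun x => f (t + x)) (Set.Ioi c) := by
  have h := ((me_add t).integrableOn_map_iff (f := f) (μ := volume) (s := Set.Ioi (t + c)))
  rw [map_add_left_eq_self volume t, Set.preimage_const_add_Ioi, add_sub_cancel_left] at h
  exact h.mp hf

private lemma integrableOn_Iio_shift {f : ℝ → ℝ} {t c : ℝ}
    (hf : IntegrableOn f (Set.Iio (t + c))) :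
    IntegrableOn (fun x => f (t + x)) (Set.Iio c) := by
  have h := ((me_add t).integrableOn_map_iff (f := f) (μ := volume) (s := Set.Iio (t + c)))
  rw [map_add_left_eq_self volume t, Set.preimage_const_add_Iio, add_sub_cancel_left] at h
  exact h.mp hf

private lemma integrableOn_exp_neg_mul {a C : ℝ} (ha : 0 < a) {w : ℝ → ℝ}
    (hw : Continuous w) (hg : ∀ s, |w s| ≤ C * (1 + |s|)) (c : ℝ) :
    IntegrableOn (fun s => Real.exp (-a * s) * w s) (Set.Ioi c) := by
  have hC : 0 ≤ C := le_trans (abs_nonneg _) (by simpa using hg 0)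
  refine integrable_of_isBigO_exp_neg (b := a / 2) (half_pos ha)
    (((Real.continuous_exp.comp (continuous_const.mul continuous_id)).mul hw).continuousOn) ?_
  rw [Asymptotics.isBigO_iff]
  refine ⟨C * (1 + 2 / a), ?_⟩
  filter_upwards [eventually_ge_atTop (0 : ℝ)] with x hx
  have h1 : |w x| ≤ C * (1 + x) := by simpa [abs_of_nonneg hx] using hg x
  have h2 : 1 + x ≤ (1 + 2 / a) * Real.exp (a / 2 * x) := by
    have h3 := Real.add_one_le_exp (a / 2 * x)
    have h4 : (1 + 2 / a) * (a / 2 * x + 1) ≤ (1 + 2 / a) * Real.exp (a / 2 * x) := by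
      apply mul_le_mul_of_nonneg_left h3; positivity
    have he : (1 + 2 / a) * (a / 2 * x + 1) = 1 + x + a / 2 * x + 2 / a := by
      field_simp; ring
    have h5 : 0 ≤ a / 2 * x := mul_nonneg (by positivity) hx
    have h6 : (0:ℝ) ≤ 2 / a := by positivity
    linarith
  have key : Real.exp (-a * x) * |w x| ≤ C * (1 + 2 / a) * Real.exp (-(a / 2) * x) := by
    calc Real.exp (-a * x) * |w x| ≤ Real.exp (-a * x) * (C * (1 + x)) :=
          mul_le_mul_of_nonneg_left h1 (Real.exp_pos _).le
      _ ≤ Real.exp (-a * x) * (C * ((1 + 2 / a) * Real.exp (a / 2 * x))) :=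
          mul_le_mul_of_nonneg_left (mul_le_mul_of_nonneg_left h2 hC) (Real.exp_pos _).le
      _ = C * (1 + 2 / a) * Real.exp (-(a / 2) * x) := by
          rw [show -(a / 2) * x = -a * x + a / 2 * x by ring, Real.exp_add]; ring
  calc ‖Real.exp (-a * x) * w x‖ = Real.exp (-a * x) * |w x| := by
        rw [norm_mul, Real.norm_eq_abs, Real.norm_eq_abs, abs_of_pos (Real.exp_pos _)]
    _ ≤ C * (1 + 2 / a) * Real.exp (-(a / 2) * x) := key
    _ = C * (1 + 2 / a) * ‖Real.exp (-(a / 2) * x)‖ := by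
        rw [Real.norm_eq_abs, abs_of_pos (Real.exp_pos _)]

private lemma integrableOn_exp_mul_Iio {a C : ℝ} (ha : 0 < a) {w : ℝ → ℝ}
    (hw : Continuous w) (hg : ∀ s, |w s| ≤ C * (1 + |s|)) (c : ℝ) :
    IntegrableOn (fun s => Real.exp (a * s) * w s) (Set.Iio c) := by
  have h := integrableOn_exp_neg_mul ha (hw.comp continuous_neg)
    (fun s => by simpa using hg (-s)) (-c)
  have m : MeasurableEmbedding (fun x : ℝ => -x) :=
    (Homeomorph.neg ℝ).isClosedEmbedding.measurableEmbedding
  have hiff := m.integrableOn_map_iff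
    (f := fun s => Real.exp (a * s) * w s) (μ := volume) (s := Set.Iio c)
  rw [Measure.map_neg_eq_self (volume : Measure ℝ)] at hiff
  rw [hiff]
  have hset : (fun x : ℝ => -x) ⁻¹' Set.Iio c = Set.Ioi (-c) := by
    ext x; simp [lt_neg]
  rw [hset]
  exact h.congr_fun (fun x _ => by simp [Function.comp, mul_neg, neg_mul]) measurableSet_Ioi

private lemma integrableOn_exp_mul_Iic' {a C : ℝ} (ha : 0 < a) {w : ℝ → ℝ}
    (hw : Continuous w) (hg : ∀ s, |w s| ≤ C * (1 + |s|)) (c : ℝ) :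
    IntegrableOn (fun s => Real.exp (a * s) * w s) (Set.Iic c) :=
  (integrableOn_Iic_iff_integrableOn_Iio).mpr (integrableOn_exp_mul_Iio ha hw hg c)

private lemma integral_Ioi_split_le (f : ℝ → ℝ) {u v : ℝ} (huv : u ≤ v)
    (h : ∀ c : ℝ, IntegrableOn f (Set.Ioi c)) :
    ∫ x in Set.Ioi u, f x = (∫ x in u..v, f x) + ∫ x in Set.Ioi v, f x := by
  rw [intervalIntegral.integral_of_le huv,
    ← setIntegral_union (Set.Ioc_disjoint_Ioi le_rfl) measurableSet_Ioi
      ((h u).mono_set Set.Ioc_subset_Ioi_self) (h v),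
    Set.Ioc_union_Ioi_eq_Ioi huv]

private lemma integral_Ioi_split (f : ℝ → ℝ) (u v : ℝ)
    (h : ∀ c : ℝ, IntegrableOn f (Set.Ioi c)) :
    ∫ x in Set.Ioi u, f x = (∫ x in u..v, f x) + ∫ x in Set.Ioi v, f x := by
  rcases le_total u v with huv | hvu
  · exact integral_Ioi_split_le f huv h
  · have := integral_Ioi_split_le f hvu h
    rw [intervalIntegral.integral_symm]
    linarith

private lemma integral_Iio_split (f : ℝ → ℝ) (t : ℝ)
    (h : ∀ c : ℝ, IntegrableOn f (Set.Iic c)) :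
    ∫ x in Set.Iio t, f x = (∫ x in Set.Iio 0, f x) + ∫ x in (0:ℝ)..t, f x := by
  have := intervalIntegral.integral_Iic_sub_Iic (h 0) (h t)
  rw [integral_Iic_eq_integral_Iio, integral_Iic_eq_integral_Iio] at this
  linarith

private lemma integral_exp_neg_mul_Ioi {a : ℝ} (ha : 0 < a) :
    ∫ x in Set.Ioi (0:ℝ), Real.exp (-a * x) = 1 / a := by
  have h := integral_comp_mul_left_Ioi (fun x => Real.exp (-x)) 0 ha
  simp only [mul_zero, neg_mul] at h ⊢
  rw [h, integral_exp_neg_Ioi_zero, smul_eq_mul, mul_one, one_div]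

private lemma integral_exp_mul_Iio {a : ℝ} (ha : 0 < a) :
    ∫ x in Set.Iio (0:ℝ), Real.exp (a * x) = 1 / a := by
  rw [← integral_Iic_eq_integral_Iio]
  calc ∫ t in Set.Iic (0:ℝ), Real.exp (a * t)
      = ∫ t in Set.Iic (0:ℝ), (fun x => Real.exp (-a * x)) (-t) := by
        refine setIntegral_congr_fun measurableSet_Iic (fun x _ => ?_)
        exact congrArg Real.exp (by ring)
    _ = ∫ x in Set.Ioi (-(0:ℝ)), Real.exp (-a * x) := by
        simpa using integral_comp_neg_Iic (0:ℝ) (fun x => Real.exp (-a * x))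
    _ = 1 / a := by rw [neg_zero]; exact integral_exp_neg_mul_Ioi ha

/-- The key identity for the expanding component: `φ` maps the stationary point of `w`
to the stationary point of `θ_t w`. -/
private lemma phi_fixed {a C : ℝ} (ha : 0 < a) (b : ℝ) {w : ℝ → ℝ}
    (hw : Continuous w) (hg : ∀ s, |w s| ≤ C * (1 + |s|)) (t : ℝ) :
    phiSol a b t w (xStat a b w) = xStat a b (shiftPath t w) := by
  have hInt : ∀ c : ℝ, IntegrableOn (fun s => Real.exp (-a * s) * w s) (Set.Ioi c) :=
    integrableOn_exp_neg_mul ha hw hg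
  -- shift the integral
  have hshift : ∫ s in Set.Ioi (0:ℝ), Real.exp (-a * s) * w (t + s)
      = Real.exp (a * t) * ∫ u in Set.Ioi t, Real.exp (-a * u) * w u := by
    rw [← integral_const_mul]
    have : ∀ s : ℝ, Real.exp (-a * s) * w (t + s)
        = Real.exp (a * t) * (Real.exp (-a * (t + s)) * w (t + s)) := by
      intro s
      rw [← mul_assoc, ← Real.exp_add]
      ring_nf
    simp_rw [this]
    have := integral_Ioi_shift (fun u => Real.exp (a * t) * (Real.exp (-a * u) * w u)) t 0
    rw [add_zero] at this
    exact this
  have hIntShift : IntegrableOn (fun s => Real.exp (-a * s) * w (t + s)) (Set.Ioi (0:ℝ)) := by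
    have h1 : IntegrableOn (fun s => Real.exp (a * t) * (Real.exp (-a * (t + s)) * w (t + s)))
        (Set.Ioi (0:ℝ)) := by
      have := integrableOn_Ioi_shift (t := t) (c := 0)
        ((hInt (t + 0)).const_mul (Real.exp (a * t)))
      simpa using this
    refine h1.congr_fun (fun s _ => ?_) measurableSet_Ioi
    beta_reduce
    rw [← mul_assoc, ← Real.exp_add]
    ring_nf
  have hsplit := integral_Ioi_split (fun s => Real.exp (-a * s) * w s) 0 t hInt
  have hexp : ∫ s in Set.Ioi (0:ℝ), Real.exp (-a * s) * w t
      = w t / a := by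
    rw [integral_mul_const, integral_exp_neg_mul_Ioi ha]
    ring
  have hIntExp : IntegrableOn (fun s => Real.exp (-a * s) * w t) (Set.Ioi (0:ℝ)) :=
    (exp_neg_integrableOn_Ioi 0 ha).mul_const _
  -- expand the target
  have htarget : xStat a b (shiftPath t w)
      = -(a * b) * ((∫ s in Set.Ioi (0:ℝ), Real.exp (-a * s) * w (t + s)) - w t / a) := by
    unfold xStat shiftPath
    rw [show (fun s => Real.exp (-a * s) * (w (t + s) - w t))
        = fun s => Real.exp (-a * s) * w (t + s) - Real.exp (-a * s) * w t by
          funext s; ring]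
    rw [integral_sub hIntShift hIntExp, hexp]
  rw [htarget, hshift]
  unfold phiSol xStat
  have ha' : a ≠ 0 := ha.ne'
  have : (∫ u in Set.Ioi t, Real.exp (-a * u) * w u)
      = (∫ s in Set.Ioi (0:ℝ), Real.exp (-a * s) * w s)
        - ∫ s in (0:ℝ)..t, Real.exp (-a * s) * w s := by linarith
  rw [this]
  field_simp
  ring

/-- The key identity for the contracting component. -/
private lemma psi_fixed {a C : ℝ} (ha : 0 < a) (b : ℝ) {w : ℝ → ℝ}
    (hw : Continuous w) (hg : ∀ s, |w s| ≤ C * (1 + |s|)) (t : ℝ) :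
    psiSol a b t w (yStat a b w) = yStat a b (shiftPath t w) := by
  have hInt : ∀ c : ℝ, IntegrableOn (fun s => Real.exp (a * s) * w s) (Set.Iic c) :=
    integrableOn_exp_mul_Iic' ha hw hg
  have hIntIio : ∀ c : ℝ, IntegrableOn (fun s => Real.exp (a * s) * w s) (Set.Iio c) :=
    fun c => (hInt c).mono_set Set.Iio_subset_Iic_self
  have hshift : ∫ s in Set.Iio (0:ℝ), Real.exp (a * s) * w (t + s)
      = Real.exp (-(a * t)) * ∫ u in Set.Iio t, Real.exp (a * u) * w u := by
    rw [← integral_const_mul]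
    have : ∀ s : ℝ, Real.exp (a * s) * w (t + s)
        = Real.exp (-(a * t)) * (Real.exp (a * (t + s)) * w (t + s)) := by
      intro s
      rw [← mul_assoc, ← Real.exp_add]
      ring_nf
    simp_rw [this]
    have := integral_Iio_shift (fun u => Real.exp (-(a * t)) * (Real.exp (a * u) * w u)) t 0
    rw [add_zero] at this
    exact this
  have hIntShift : IntegrableOn (fun s => Real.exp (a * s) * w (t + s)) (Set.Iio (0:ℝ)) := by
    have h1 : IntegrableOn (fun s => Real.exp (-(a * t)) * (Real.exp (a * (t + s)) * w (t + s)))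
        (Set.Iio (0:ℝ)) := by
      have := integrableOn_Iio_shift (t := t) (c := 0)
        ((hIntIio (t + 0)).const_mul (Real.exp (-(a * t))))
      simpa using this
    refine h1.congr_fun (fun s _ => ?_) measurableSet_Iio
    beta_reduce
    rw [← mul_assoc, ← Real.exp_add]
    ring_nf
  have hsplit := integral_Iio_split (fun s => Real.exp (a * s) * w s) t hInt
  have hexp : ∫ s in Set.Iio (0:ℝ), Real.exp (a * s) * w t = w t / a := by
    rw [integral_mul_const, integral_exp_mul_Iio ha]
    ring
  have hIntExp : IntegrableOn (fun s => Real.exp (a * s) * w t) (Set.Iio (0:ℝ)) := by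
    have h1 : IntegrableOn (fun s : ℝ => Real.exp (a * s)) (Set.Iio (0:ℝ)) := by
      have := integrableOn_exp_mul_Iio (C := 1) (w := fun _ : ℝ => (1:ℝ)) ha continuous_const
        (fun s => by rw [abs_one, one_mul]; linarith [abs_nonneg s]) 0
      simpa using this
    exact h1.mul_const (w t)
  have htarget : yStat a b (shiftPath t w)
      = -(a * b) * ((∫ s in Set.Iio (0:ℝ), Real.exp (a * s) * w (t + s)) - w t / a) := by
    unfold yStat shiftPath
    rw [show (fun s => Real.exp (a * s) * (w (t + s) - w t))
        = fun s => Real.exp (a * s) * w (t + s) - Real.exp (a * s) * w t by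
          funext s; ring]
    rw [integral_sub hIntShift hIntExp, hexp]
  rw [htarget, hshift]
  unfold psiSol yStat
  have ha' : a ≠ 0 := ha.ne'
  rw [hsplit]
  field_simp
  ring

private lemma bijOn_fst {f g : ℝ → ℝ} {c c' : ℝ} (hfc : f c = c')
    (hg : Function.Bijective g) :
    Set.BijOn (fun p : ℝ × ℝ => (f p.1, g p.2))
      {p : ℝ × ℝ | p.1 = c} {p : ℝ × ℝ | p.1 = c'} := by
  refine ⟨fun p hp => ?_, fun p hp q hq hpq => ?_, fun q hq => ?_⟩
  · simp only [Set.mem_setOf_eq] at hp ⊢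
    rw [hp, hfc]
  · simp only [Set.mem_setOf_eq] at hp hq
    have h2 : g p.2 = g q.2 := congrArg Prod.snd hpq
    exact Prod.ext (hp.trans hq.symm) (hg.injective h2)
  · simp only [Set.mem_setOf_eq] at hq
    obtain ⟨y, hy⟩ := hg.surjective q.2
    refine ⟨(c, y), rfl, ?_⟩
    exact Prod.ext (hfc.trans hq.symm) hy

private lemma bijOn_snd {f g : ℝ → ℝ} {c c' : ℝ} (hgc : g c = c')
    (hf : Function.Bijective f) :
    Set.BijOn (fun p : ℝ × ℝ => (f p.1, g p.2))
      {p : ℝ × ℝ | p.2 = c} {p : ℝ × ℝ | p.2 = c'} := by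
  refine ⟨fun p hp => ?_, fun p hp q hq hpq => ?_, fun q hq => ?_⟩
  · simp only [Set.mem_setOf_eq] at hp ⊢
    rw [hp, hgc]
  · simp only [Set.mem_setOf_eq] at hp hq
    have h1 : f p.1 = f q.1 := congrArg Prod.fst hpq
    exact Prod.ext (hf.injective h1) (hp.trans hq.symm)
  · simp only [Set.mem_setOf_eq] at hq
    obtain ⟨x, hx⟩ := hf.surjective q.1
    refine ⟨(x, c), rfl, ?_⟩
    exact Prod.ext hx (hgc.trans hq.symm)

private lemma phi_bijective (a b t : ℝ) (w : ℝ → ℝ) :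
    Function.Bijective (phiSol a b t w) := by
  have : phiSol a b t w = fun x => Real.exp (a * t) * x +
      (b * w t + a * b * Real.exp (a * t) * ∫ s in (0:ℝ)..t, Real.exp (-a * s) * w s) := by
    funext x; unfold phiSol; ring
  rw [this]
  exact affine_bij (Real.exp_ne_zero _) _

private lemma psi_bijective (a b t : ℝ) (w : ℝ → ℝ) :
    Function.Bijective (psiSol a b t w) := by
  have : psiSol a b t w = fun y => Real.exp (-a * t) * y +
      (b * w t - a * b * Real.exp (-a * t) * ∫ s in (0:ℝ)..t, Real.exp (a * s) * w s) := by
    funext y; unfold psiSol; ring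
  rw [this]
  exact affine_bij (Real.exp_ne_zero _) _

end Aux

theorem noisy_saddle_manifolds_invariant
    (a₁ a₂ : ℝ) (ha₁ : 0 < a₁) (ha₂ : 0 < a₂) (b₁ b₂ : ℝ)
    (w₁ w₂ : ℝ → ℝ) (hw₁ : Continuous w₁) (hw₁0 : w₁ 0 = 0)
    (hw₂ : Continuous w₂) (hw₂0 : w₂ 0 = 0)
    (C₁ : ℝ) (hC₁ : 0 ≤ C₁) (hg₁ : ∀ s : ℝ, |w₁ s| ≤ C₁ * (1 + |s|))
    (C₂ : ℝ) (hC₂ : 0 ≤ C₂) (hg₂ : ∀ s : ℝ, |w₂ s| ≤ C₂ * (1 + |s|)) :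
    ∀ t : ℝ,
      Set.BijOn (fun p : ℝ × ℝ => (phiSol a₁ b₁ t w₁ p.1, psiSol a₂ b₂ t w₂ p.2))
        {p : ℝ × ℝ | p.1 = xStat a₁ b₁ w₁}
        {p : ℝ × ℝ | p.1 = xStat a₁ b₁ (shiftPath t w₁)} ∧
      Set.BijOn (fun p : ℝ × ℝ => (phiSol a₁ b₁ t w₁ p.1, psiSol a₂ b₂ t w₂ p.2))
        {p : ℝ × ℝ | p.2 = yStat a₂ b₂ w₂}
        {p : ℝ × ℝ | p.2 = yStat a₂ b₂ (shiftPath t w₂)} := by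
  intro t
  constructor
  · exact bijOn_fst (phi_fixed ha₁ b₁ hw₁ hg₁ t) (psi_bijective a₂ b₂ t w₂)
  · exact bijOn_snd (psi_fixed ha₂ b₂ hw₂ hg₂ t) (phi_bijective a₁ b₁ t w₁)
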